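/- Let η : B₁* → B₂* be an orientation preserving Grothendieck transformation between stably oriented bivariant theories, where B₁* satisfies the section axiom and the formal group law axiom with formal group law F^{B₁} ∈ B₁*(pt)[[x,y]]. Then B₂* also satisfies the section and formal group law axioms, and its formal group law is F^{B₂}(x,y) = η(F^{B₁}(x,y)), which is moreover the unique power series F with c₁(L₁ ⊗ L₂) = F(c₁(L₁), c₁(L₂)) for all line bundles on all X. -/

import Mathlib

open CategoryTheory CategoryTheory.Limits

universe v u

/-- A Fulton–MacPherson functoriality: classes of confined and specialized morphisms
(all Cartesian squares are independent). -/
structure Functoriality (C : Type u) [Category.{v} C] where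
  Confined : MorphismProperty C
  Specialized : MorphismProperty C
  confined_id : ∀ X : C, Confined (𝟙 X)
  confined_comp : ∀ {X Y Z : C} {f : X ⟶ Y} {g : Y ⟶ Z},
    Confined f → Confined g → Confined (f ≫ g)
  confined_pull : ∀ {P X Q Y : C} {l : P ⟶ X} {t : P ⟶ Q} {b : X ⟶ Y} {r : Q ⟶ Y},
    IsPullback l t b r → Confined b → Confined t
  specialized_id : ∀ X : C, Specialized (𝟙 X)
  specialized_comp : ∀ {X Y Z : C} {f : X ⟶ Y} {g : Y ⟶ Z},
    Specialized f → Specialized g → Specialized (f ≫ g)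
  specialized_pull : ∀ {P X Q Y : C} {l : P ⟶ X} {t : P ⟶ Q} {b : X ⟶ Y} {r : Q ⟶ Y},
    IsPullback l t b r → Specialized b → Specialized t

/-- The underlying data of a bivariant theory: groups `B (X ⟶ Y)`, bivariant product,
units, pushforwards along confined morphisms and pullbacks along (independent) Cartesian
squares.  In a square `IsPullback l t b r`, `pull` sends classes of the bottom morphism
`b` to classes of the pulled-back (top) morphism `t`. -/
structure BivariantData {C : Type u} [Category.{v} C] (F : Functoriality C) where
  B : ∀ {X Y : C}, (X ⟶ Y) → Type
  instAdd : ∀ {X Y : C} (f : X ⟶ Y), AddCommGroup (B f)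
  prod : ∀ {X Y Z : C} {f : X ⟶ Y} {g : Y ⟶ Z}, B f → B g → B (f ≫ g)
  one : ∀ X : C, B (𝟙 X)
  push : ∀ {X X' Y : C} (i : X ⟶ X'), F.Confined i → ∀ h : X' ⟶ Y, B (i ≫ h) → B h
  pull : ∀ {P X Q Y : C} {l : P ⟶ X} {t : P ⟶ Q} {b : X ⟶ Y} {r : Q ⟶ Y},
    IsPullback l t b r → B b → B t

attribute [instance] BivariantData.instAdd

/-- A bivariant theory in the sense of Fulton–MacPherson: the data above together with
the axioms (A₁), (A₂), (A₃), (A₁₂), (A₁₃), (A₂₃), (A₁₂₃) and the unit axiom (U). -/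
structure BivariantTheory {C : Type u} [Category.{v} C] (F : Functoriality C) extends
    BivariantData F where
  prod_add_left : ∀ {X Y Z : C} {f : X ⟶ Y} {g : Y ⟶ Z} (a b : B f) (c : B g),
    prod (a + b) c = prod a c + prod b c
  prod_add_right : ∀ {X Y Z : C} {f : X ⟶ Y} {g : Y ⟶ Z} (a : B f) (b c : B g),
    prod a (b + c) = prod a b + prod a c
  /-- (A₁) associativity of the bivariant product. -/
  prod_assoc : ∀ {X Y Z W : C} {f : X ⟶ Y} {g : Y ⟶ Z} {h : Z ⟶ W}
    (a : B f) (b : B g) (c : B h),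
    prod (prod a b) c = cast (by rw [Category.assoc]) (prod a (prod b c))
  /-- (U) left unit. -/
  one_prod : ∀ {X Y : C} {f : X ⟶ Y} (a : B f),
    prod (one X) a = cast (by rw [Category.id_comp]) a
  /-- (U) right unit. -/
  prod_one : ∀ {X Y : C} {f : X ⟶ Y} (a : B f),
    prod a (one Y) = cast (by rw [Category.comp_id]) a
  push_add : ∀ {X X' Y : C} (i : X ⟶ X') (hi : F.Confined i) (h : X' ⟶ Y)
    (a b : B (i ≫ h)), push i hi h (a + b) = push i hi h a + push i hi h b
  /-- (A₂) functoriality of pushforward. -/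
  push_comp : ∀ {X X' X'' Y : C} (i : X ⟶ X') (hi : F.Confined i) (j : X' ⟶ X'')
    (hj : F.Confined j) (h : X'' ⟶ Y) (a : B (i ≫ (j ≫ h))),
    push j hj h (push i hi (j ≫ h) a) =
      push (i ≫ j) (F.confined_comp hi hj) h (cast (by rw [Category.assoc]) a)
  pull_add : ∀ {P X Q Y : C} {l : P ⟶ X} {t : P ⟶ Q} {b : X ⟶ Y} {r : Q ⟶ Y}
    (sq : IsPullback l t b r) (a b' : B b), pull sq (a + b') = pull sq a + pull sq b'
  /-- pullback along the identity square is the identity. -/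
  pull_id : ∀ {X Y : C} {b : X ⟶ Y} (sq : IsPullback (𝟙 X) b b (𝟙 Y)) (a : B b),
    pull sq a = a
  /-- (A₃) functoriality of pullback. -/
  pull_comp : ∀ {P₁ X Q₁ Y P₂ Q₂ : C} {l₁ : P₁ ⟶ X} {t₁ : P₁ ⟶ Q₁} {b : X ⟶ Y}
    {r₁ : Q₁ ⟶ Y} {l₂ : P₂ ⟶ P₁} {t₂ : P₂ ⟶ Q₂} {r₂ : Q₂ ⟶ Q₁}
    (sq₁ : IsPullback l₁ t₁ b r₁) (sq₂ : IsPullback l₂ t₂ t₁ r₂)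
    (sqO : IsPullback (l₂ ≫ l₁) t₂ b (r₂ ≫ r₁)) (a : B b),
    pull sq₂ (pull sq₁ a) = pull sqO a
  /-- pullback preserves units. -/
  pull_one : ∀ {X Q : C} {l : Q ⟶ X} (sq : IsPullback l (𝟙 Q) (𝟙 X) l),
    pull sq (one X) = one Q
  /-- (A₁₂) product and pushforward commute. -/
  A12 : ∀ {X X' Y Z : C} (i : X ⟶ X') (hi : F.Confined i) (h : X' ⟶ Y) (g : Y ⟶ Z)
    (a : B (i ≫ h)) (b : B g),
    push i hi (h ≫ g) (cast (by rw [Category.assoc]) (prod a b)) =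
      prod (push i hi h a) b
  /-- (A₁₃) pullback is multiplicative. -/
  A13 : ∀ {X Y Z X' Y' Z' : C} {b₁ : X ⟶ Y} {b₂ : Y ⟶ Z} {hX : X' ⟶ X} {hY : Y' ⟶ Y}
    {r : Z' ⟶ Z} {t₁ : X' ⟶ Y'} {t₂ : Y' ⟶ Z'}
    (sq₁ : IsPullback hX t₁ b₁ hY) (sq₂ : IsPullback hY t₂ b₂ r)
    (sqO : IsPullback hX (t₁ ≫ t₂) (b₁ ≫ b₂) r) (a : B b₁) (b : B b₂),
    pull sqO (prod a b) = prod (pull sq₁ a) (pull sq₂ b)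
  /-- (A₂₃) push-pull formula. -/
  A23 : ∀ {X Y Z X' Y' Z' : C} (f : X ⟶ Y) (hf : F.Confined f) (g : Y ⟶ Z)
    {r : Z' ⟶ Z} {tX : X' ⟶ Z'} {tY : Y' ⟶ Z'} {hX : X' ⟶ X} {hY : Y' ⟶ Y}
    (f' : X' ⟶ Y') (hf' : F.Confined f')
    (sqO : IsPullback hX tX (f ≫ g) r) (sqY : IsPullback hY tY g r)
    (e : f' ≫ tY = tX) (a : B (f ≫ g)),
    pull sqY (push f hf g a) = push f' hf' tY (cast (by rw [e]) (pull sqO a))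
  /-- (A₁₂₃) projection formula. -/
  A123 : ∀ {P X Q Y Z : C} {l : P ⟶ X} {t : P ⟶ Q} {b : X ⟶ Y} {r : Q ⟶ Y}
    (sq : IsPullback l t b r) (hl : F.Confined l) (hr : F.Confined r) (k : Y ⟶ Z)
    (a : B (r ≫ k)) (β : B b) (e : t ≫ (r ≫ k) = l ≫ (b ≫ k)),
    push l hl (b ≫ k) (cast (by rw [e]) (prod (pull sq β) a)) =
      prod β (push r hr k a)

/-- A stable orientation on a bivariant theory: classes `θ(f)` for all specialized
morphisms, multiplicative, unital and stable under pullbacks. -/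
structure StableOrientation {C : Type u} [Category.{v} C] {F : Functoriality C}
    (T : BivariantTheory F) where
  θ : ∀ {X Y : C} (f : X ⟶ Y), F.Specialized f → T.B f
  θ_id : ∀ X : C, θ (𝟙 X) (F.specialized_id X) = T.one X
  θ_comp : ∀ {X Y Z : C} (f : X ⟶ Y) (g : Y ⟶ Z) (hf : F.Specialized f)
    (hg : F.Specialized g),
    θ (f ≫ g) (F.specialized_comp hf hg) = T.prod (θ f hf) (θ g hg)
  θ_pull : ∀ {P X Q Y : C} {l : P ⟶ X} {t : P ⟶ Q} {b : X ⟶ Y} {r : Q ⟶ Y}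
    (sq : IsPullback l t b r) (hb : F.Specialized b),
    T.pull sq (θ b hb) = θ t (F.specialized_pull sq hb)

variable {C : Type u} [Category.{v} C] {F : Functoriality C}

/-- Left action of a coefficient class `r ∈ B(pt → pt)` on `B(X → Y)`:
`r · α := π_X^*(r) • α`. -/
def BivariantTheory.lAct (T : BivariantTheory F) {pt : C} {π : ∀ X : C, X ⟶ pt}
    (sq : ∀ X : C, IsPullback (π X) (𝟙 X) (𝟙 pt) (π X)) (r : T.B (𝟙 pt))
    {X Y : C} {f : X ⟶ Y} (α : T.B f) : T.B f :=
  cast (by rw [Category.id_comp]) (T.prod (T.pull (sq X) r) α)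

/-- Right action of a coefficient class `r ∈ B(pt → pt)` on `B(X → Y)`:
`α · r := α • π_Y^*(r)`. -/
def BivariantTheory.rAct (T : BivariantTheory F) {pt : C} {π : ∀ X : C, X ⟶ pt}
    (sq : ∀ X : C, IsPullback (π X) (𝟙 X) (𝟙 pt) (π X))
    {X Y : C} {f : X ⟶ Y} (α : T.B f) (r : T.B (𝟙 pt)) : T.B f :=
  cast (by rw [Category.comp_id]) (T.prod α (T.pull (sq Y) r))

/-- The cup product on the associated cohomology ring `B^*(X) = B(X →^{id} X)`. -/
def BivariantTheory.cprod (T : BivariantTheory F) {X : C} (a b : T.B (𝟙 X)) :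
    T.B (𝟙 X) :=
  cast (by rw [Category.id_comp]) (T.prod a b)

/-- Powers in the associated cohomology ring. -/
def BivariantTheory.cpow (T : BivariantTheory F) {X : C} (a : T.B (𝟙 X)) :
    ℕ → T.B (𝟙 X)
  | 0 => T.one X
  | n + 1 => T.cprod a (T.cpow a n)

/-- The Gysin pushforward `f_!(1) = f_*(θ(f))` of the unit along a confined and
specialized morphism. -/
def BivariantTheory.gysinOne (T : BivariantTheory F) (O : StableOrientation T)
    {V X : C} (f : V ⟶ X) (hc : F.Confined f) (hs : F.Specialized f) : T.B (𝟙 X) :=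
  T.push f hc (𝟙 X) (cast (by rw [Category.comp_id]) (O.θ f hs))

/-- The first Chern class `c₁(L) = s₀^* s₀_!(1)` of a line bundle with total space `L`
and zero section `s₀`. -/
def BivariantTheory.c1 (T : BivariantTheory F) (O : StableOrientation T)
    {X L : C} (s₀ : X ⟶ L) (hc : F.Confined s₀) (hs : F.Specialized s₀)
    (sq : IsPullback s₀ (𝟙 X) (𝟙 L) s₀) : T.B (𝟙 X) :=
  T.pull sq (T.gysinOne O s₀ hc hs)

/-- An abstract theory of line bundles on an admissible functoriality: each object `X`
has a collection `LB X` of line bundles; each line bundle has a total space with a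
confined, specialized zero section; line bundles can be tensored; and each line bundle
has a collection of global sections, each with a (derived) vanishing locus whose
inclusion is confined and specialized. -/
structure LineBundleTheory {C : Type u} [Category.{v} C] (F : Functoriality C) where
  LB : C → Type
  total : ∀ {X : C}, LB X → C
  zero : ∀ {X : C} (L : LB X), X ⟶ total L
  conf : ∀ {X : C} (L : LB X), F.Confined (zero L)
  spec : ∀ {X : C} (L : LB X), F.Specialized (zero L)
  sq : ∀ {X : C} (L : LB X), IsPullback (zero L) (𝟙 X) (𝟙 (total L)) (zero L)
  tensor : ∀ {X : C}, LB X → LB X → LB X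
  Sections : ∀ {X : C}, LB X → Type
  vloc : ∀ {X : C} {L : LB X}, Sections L → C
  vinc : ∀ {X : C} {L : LB X} (s : Sections L), vloc s ⟶ X
  vconf : ∀ {X : C} {L : LB X} (s : Sections L), F.Confined (vinc s)
  vspec : ∀ {X : C} {L : LB X} (s : Sections L), F.Specialized (vinc s)

variable {C : Type u} [Category.{v} C] {F : Functoriality C}

/-- The first Chern class of an abstract line bundle. -/
def BivariantTheory.c1L (T : BivariantTheory F) (O : StableOrientation T)
    (LBs : LineBundleTheory F) {X : C} (L : LBs.LB X) : T.B (𝟙 X) :=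
  T.c1 O (LBs.zero L) (LBs.conf L) (LBs.spec L) (LBs.sq L)

/-- `B*` satisfies the *section axiom*: for every line bundle and every global section
`s`, `c₁(L) = i_{s!}(1_{Z_s})`. -/
def SectionAxiom (T : BivariantTheory F) (O : StableOrientation T)
    (LBs : LineBundleTheory F) : Prop :=
  ∀ (X : C) (L : LBs.LB X) (s : LBs.Sections L),
    T.c1L O LBs L = T.gysinOne O (LBs.vinc s) (LBs.vconf s) (LBs.vspec s)

/-- All first Chern classes of line bundles are nilpotent. -/
def ChernNilpotent (T : BivariantTheory F) (O : StableOrientation T)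
    (LBs : LineBundleTheory F) : Prop :=
  ∀ (X : C) (L : LBs.LB X), ∃ N, T.cpow (T.c1L O LBs L) N = 0

/-- Truncated evaluation of a formal power series (given by its coefficient function
`Fc : ℕ → ℕ → B*(pt)`) at two cohomology classes `x, y ∈ B*(X)`; for `x, y` nilpotent
of order `< N` this is the honest evaluation `F(x, y)`. -/
def evalPS (T : BivariantTheory F) {pt : C} {π : ∀ X : C, X ⟶ pt}
    (sq : ∀ X : C, IsPullback (π X) (𝟙 X) (𝟙 pt) (π X))
    (Fc : ℕ → ℕ → T.B (𝟙 pt)) {X : C} (x y : T.B (𝟙 X)) (N : ℕ) : T.B (𝟙 X) :=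
  ∑ i ∈ Finset.range N, ∑ j ∈ Finset.range N,
    T.cprod (T.pull (sq X) (Fc i j)) (T.cprod (T.cpow x i) (T.cpow y j))

/-- The power series `Fc` governs Chern classes of tensor products:
`c₁(L₁ ⊗ L₂) = F(c₁(L₁), c₁(L₂))` for all line bundles on all `X`. -/
def ChernFormula (T : BivariantTheory F) (O : StableOrientation T)
    (LBs : LineBundleTheory F) {pt : C} {π : ∀ X : C, X ⟶ pt}
    (sq : ∀ X : C, IsPullback (π X) (𝟙 X) (𝟙 pt) (π X))
    (Fc : ℕ → ℕ → T.B (𝟙 pt)) : Prop :=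
  ∀ (X : C) (L₁ L₂ : LBs.LB X) (N : ℕ),
    T.cpow (T.c1L O LBs L₁) N = 0 → T.cpow (T.c1L O LBs L₂) N = 0 →
    T.c1L O LBs (LBs.tensor L₁ L₂)
      = evalPS T sq Fc (T.c1L O LBs L₁) (T.c1L O LBs L₂) N

/-- A Grothendieck transformation between two bivariant theories with the same
functoriality. -/
structure GrothTrans {C : Type u} [Category.{v} C] {F : Functoriality C}
    (T₁ T₂ : BivariantTheory F) where
  η : ∀ {X Y : C} (f : X ⟶ Y), T₁.B f → T₂.B f
  η_add : ∀ {X Y : C} (f : X ⟶ Y) (a b : T₁.B f), η f (a + b) = η f a + η f b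
  η_one : ∀ X : C, η (𝟙 X) (T₁.one X) = T₂.one X
  η_prod : ∀ {X Y Z : C} (f : X ⟶ Y) (g : Y ⟶ Z) (a : T₁.B f) (b : T₁.B g),
    η (f ≫ g) (T₁.prod a b) = T₂.prod (η f a) (η g b)
  η_push : ∀ {X X' Y : C} (i : X ⟶ X') (hi : F.Confined i) (h : X' ⟶ Y)
    (a : T₁.B (i ≫ h)), η h (T₁.push i hi h a) = T₂.push i hi h (η (i ≫ h) a)
  η_pull : ∀ {P X Q Y : C} {l : P ⟶ X} {t : P ⟶ Q} {b : X ⟶ Y} {r : Q ⟶ Y}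
    (sq : IsPullback l t b r) (a : T₁.B b), η t (T₁.pull sq a) = T₂.pull sq (η b a)

section Aux

variable {C : Type u} [Category.{v} C] {F : Functoriality C}

lemma Bcast_zero (T : BivariantTheory F) {X Y : C} {f g : X ⟶ Y} (h : f = g)
    (e : T.B f = T.B g) : cast e (0 : T.B f) = 0 := by subst h; rw [cast_eq]

lemma Bcast_add (T : BivariantTheory F) {X Y : C} {f g : X ⟶ Y} (h : f = g)
    (e : T.B f = T.B g) (a b : T.B f) : cast e (a + b) = cast e a + cast e b := by
  subst h; rw [cast_eq, cast_eq, cast_eq]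

lemma cast_prod_left (T : BivariantTheory F) {X Y Z : C} {f g : X ⟶ Y} (h : f = g)
    {k : Y ⟶ Z} (e : T.B f = T.B g) (e' : T.B (f ≫ k) = T.B (g ≫ k))
    (a : T.B f) (c : T.B k) : T.prod (cast e a) c = cast e' (T.prod a c) := by
  subst h; rw [cast_eq, cast_eq]

lemma cast_prod_right (T : BivariantTheory F) {X Y Z : C} (f : X ⟶ Y) {k k' : Y ⟶ Z}
    (h : k = k') (e : T.B k = T.B k') (e' : T.B (f ≫ k) = T.B (f ≫ k'))
    (a : T.B f) (c : T.B k) : T.prod a (cast e c) = cast e' (T.prod a c) := by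
  subst h; rw [cast_eq, cast_eq]

lemma prod_zero_right (T : BivariantTheory F) {X Y Z : C} {f : X ⟶ Y} {g : Y ⟶ Z}
    (a : T.B f) : T.prod a (0 : T.B g) = 0 := by
  have h := T.prod_add_right a (0 : T.B g) 0
  rw [add_zero] at h
  have h2 : T.prod a (0 : T.B g) + 0 = T.prod a (0 : T.B g) + T.prod a (0 : T.B g) := by
    rw [add_zero]; exact h
  exact (add_left_cancel h2).symm

lemma prod_zero_left (T : BivariantTheory F) {X Y Z : C} {f : X ⟶ Y} {g : Y ⟶ Z}
    (b : T.B g) : T.prod (0 : T.B f) b = 0 := by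
  have h := T.prod_add_left (0 : T.B f) 0 b
  rw [add_zero] at h
  have h2 : T.prod (0 : T.B f) b + 0 = T.prod (0 : T.B f) b + T.prod (0 : T.B f) b := by
    rw [add_zero]; exact h
  exact (add_left_cancel h2).symm

lemma cprod_zero (T : BivariantTheory F) {X : C} (a : T.B (𝟙 X)) :
    T.cprod a 0 = 0 := by
  unfold BivariantTheory.cprod
  rw [prod_zero_right, Bcast_zero T (Category.id_comp (𝟙 X))]

lemma zero_cprod (T : BivariantTheory F) {X : C} (a : T.B (𝟙 X)) :
    T.cprod 0 a = 0 := by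
  unfold BivariantTheory.cprod
  rw [prod_zero_left, Bcast_zero T (Category.id_comp (𝟙 X))]

lemma one_cprod (T : BivariantTheory F) {X : C} (a : T.B (𝟙 X)) :
    T.cprod (T.one X) a = a := by
  unfold BivariantTheory.cprod
  rw [T.one_prod, cast_cast, cast_eq]

lemma cprod_one (T : BivariantTheory F) {X : C} (a : T.B (𝟙 X)) :
    T.cprod a (T.one X) = a := by
  unfold BivariantTheory.cprod
  rw [T.prod_one, cast_cast, cast_eq]

lemma cprod_assoc (T : BivariantTheory F) {X : C} (a b c : T.B (𝟙 X)) :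
    T.cprod (T.cprod a b) c = T.cprod a (T.cprod b c) := by
  unfold BivariantTheory.cprod
  rw [cast_prod_left T (Category.id_comp (𝟙 X)) _ (by simp),
      cast_cast, T.prod_assoc, cast_cast,
      cast_prod_right T (𝟙 X) (Category.id_comp (𝟙 X)) _ (by simp),
      cast_cast]

lemma cpow_add (T : BivariantTheory F) {X : C} (x : T.B (𝟙 X)) (m n : ℕ) :
    T.cpow x (m + n) = T.cprod (T.cpow x m) (T.cpow x n) := by
  induction m with
  | zero => rw [Nat.zero_add]; exact (one_cprod T _).symm
  | succ m ih =>
      have h : m + 1 + n = (m + n) + 1 := by omega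
      rw [h]
      show T.cprod x (T.cpow x (m + n)) = _
      rw [ih, ← cprod_assoc]
      rfl

lemma cpow_eq_zero (T : BivariantTheory F) {X : C} {x : T.B (𝟙 X)} {N : ℕ}
    (h0 : T.cpow x N = 0) {i : ℕ} (hi : N ≤ i) : T.cpow x i = 0 := by
  obtain ⟨k, rfl⟩ := Nat.exists_eq_add_of_le hi
  rw [Nat.add_comm, cpow_add, h0, cprod_zero]

variable {T₁ T₂ : BivariantTheory F}

lemma eta_zero (τ : GrothTrans T₁ T₂) {X Y : C} (f : X ⟶ Y) : τ.η f 0 = 0 := by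
  have h := τ.η_add f 0 0
  rw [add_zero] at h
  have h2 : τ.η f (0 : T₁.B f) + 0 = τ.η f 0 + τ.η f 0 := by rw [add_zero]; exact h
  exact (add_left_cancel h2).symm

lemma eta_cast (τ : GrothTrans T₁ T₂) {X Y : C} {f g : X ⟶ Y} (h : f = g)
    (e : T₁.B f = T₁.B g) (e' : T₂.B f = T₂.B g) (a : T₁.B f) :
    τ.η g (cast e a) = cast e' (τ.η f a) := by
  subst h; rw [cast_eq, cast_eq]

lemma eta_cprod (τ : GrothTrans T₁ T₂) {X : C} (a b : T₁.B (𝟙 X)) :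
    τ.η (𝟙 X) (T₁.cprod a b) = T₂.cprod (τ.η (𝟙 X) a) (τ.η (𝟙 X) b) := by
  unfold BivariantTheory.cprod
  rw [eta_cast τ (Category.id_comp (𝟙 X)) _ (by rw [Category.id_comp]), τ.η_prod]

lemma eta_cpow (τ : GrothTrans T₁ T₂) {X : C} (x : T₁.B (𝟙 X)) (n : ℕ) :
    τ.η (𝟙 X) (T₁.cpow x n) = T₂.cpow (τ.η (𝟙 X) x) n := by
  induction n with
  | zero => exact τ.η_one X
  | succ n ih =>
      show τ.η (𝟙 X) (T₁.cprod x (T₁.cpow x n)) = T₂.cprod (τ.η (𝟙 X) x) (T₂.cpow _ n)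
      rw [eta_cprod, ih]

lemma eta_sum (τ : GrothTrans T₁ T₂) {X Y : C} (f : X ⟶ Y) {ι : Type*}
    (s : Finset ι) (g : ι → T₁.B f) :
    τ.η f (∑ i ∈ s, g i) = ∑ i ∈ s, τ.η f (g i) :=
  map_sum (AddMonoidHom.mk' (τ.η f) (τ.η_add f)) g s

lemma eta_gysinOne (τ : GrothTrans T₁ T₂) {O₁ : StableOrientation T₁}
    {O₂ : StableOrientation T₂}
    (τθ : ∀ (X Y : C) (f : X ⟶ Y) (hf : F.Specialized f),
      τ.η f (O₁.θ f hf) = O₂.θ f hf)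
    {V X : C} (f : V ⟶ X) (hc : F.Confined f) (hs : F.Specialized f) :
    τ.η (𝟙 X) (T₁.gysinOne O₁ f hc hs) = T₂.gysinOne O₂ f hc hs := by
  unfold BivariantTheory.gysinOne
  rw [τ.η_push, eta_cast τ (Category.comp_id f).symm _ (by rw [Category.comp_id]),
      τθ]

lemma eta_c1L (τ : GrothTrans T₁ T₂) {O₁ : StableOrientation T₁}
    {O₂ : StableOrientation T₂}
    (τθ : ∀ (X Y : C) (f : X ⟶ Y) (hf : F.Specialized f),
      τ.η f (O₁.θ f hf) = O₂.θ f hf)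
    (LBs : LineBundleTheory F) {X : C} (L : LBs.LB X) :
    τ.η (𝟙 X) (T₁.c1L O₁ LBs L) = T₂.c1L O₂ LBs L := by
  unfold BivariantTheory.c1L BivariantTheory.c1
  rw [τ.η_pull, eta_gysinOne τ τθ]

lemma eta_evalPS (τ : GrothTrans T₁ T₂) {pt : C} {π : ∀ X : C, X ⟶ pt}
    (sq : ∀ X : C, IsPullback (π X) (𝟙 X) (𝟙 pt) (π X))
    (Fc : ℕ → ℕ → T₁.B (𝟙 pt)) {X : C} (x y : T₁.B (𝟙 X)) (N : ℕ) :
    τ.η (𝟙 X) (evalPS T₁ sq Fc x y N)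
      = evalPS T₂ sq (fun i j => τ.η (𝟙 pt) (Fc i j)) (τ.η (𝟙 X) x) (τ.η (𝟙 X) y) N := by
  unfold evalPS
  rw [eta_sum]
  refine Finset.sum_congr rfl fun i _ => ?_
  rw [eta_sum]
  refine Finset.sum_congr rfl fun j _ => ?_
  rw [eta_cprod, τ.η_pull, eta_cprod, eta_cpow, eta_cpow]

lemma evalPS_trunc (T : BivariantTheory F) {pt : C} {π : ∀ X : C, X ⟶ pt}
    (sq : ∀ X : C, IsPullback (π X) (𝟙 X) (𝟙 pt) (π X))
    (Fc : ℕ → ℕ → T.B (𝟙 pt)) {X : C} (x y : T.B (𝟙 X)) {N M : ℕ} (hNM : N ≤ M)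
    (hx : T.cpow x N = 0) (hy : T.cpow y N = 0) :
    evalPS T sq Fc x y M = evalPS T sq Fc x y N := by
  have tzx : ∀ i j, N ≤ i →
      T.cprod (T.pull (sq X) (Fc i j)) (T.cprod (T.cpow x i) (T.cpow y j)) = 0 := by
    intro i j hi
    rw [cpow_eq_zero T hx hi, zero_cprod, cprod_zero]
  have tzy : ∀ i j, N ≤ j →
      T.cprod (T.pull (sq X) (Fc i j)) (T.cprod (T.cpow x i) (T.cpow y j)) = 0 := by
    intro i j hj
    rw [cpow_eq_zero T hy hj, cprod_zero, cprod_zero]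
  unfold evalPS
  calc ∑ i ∈ Finset.range M, ∑ j ∈ Finset.range M,
        T.cprod (T.pull (sq X) (Fc i j)) (T.cprod (T.cpow x i) (T.cpow y j))
      = ∑ i ∈ Finset.range M, ∑ j ∈ Finset.range N,
        T.cprod (T.pull (sq X) (Fc i j)) (T.cprod (T.cpow x i) (T.cpow y j)) := by
        refine Finset.sum_congr rfl fun i _ => ?_
        refine (Finset.sum_subset (Finset.range_subset_range.mpr hNM) fun j _ hj => ?_).symm
        exact tzy i j (by simpa using hj)
    _ = ∑ i ∈ Finset.range N, ∑ j ∈ Finset.range N,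
        T.cprod (T.pull (sq X) (Fc i j)) (T.cprod (T.cpow x i) (T.cpow y j)) := by
        refine (Finset.sum_subset (Finset.range_subset_range.mpr hNM) fun i _ hi => ?_).symm
        exact Finset.sum_eq_zero fun j _ => tzx i j (by simpa using hi)

end Aux

/-- Let `η : B₁* → B₂*` be an orientation preserving Grothendieck
transformation between stably oriented bivariant theories, where `B₁*` satisfies the
section axiom and the formal group law axiom with formal group law `F^{B₁}`.  Then
`B₂*` also satisfies the section and formal group law axioms, its formal group law is
`F^{B₂} = η(F^{B₁})`, and `F^{B₂}` is the unique power series `F` with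
`c₁(L₁ ⊗ L₂) = F(c₁(L₁), c₁(L₂))` for all line bundles on all `X`.  (The geometric
input needed for uniqueness, as in the uniqueness lemma, is recorded as hypotheses
for `B₂*`.) -/
theorem fgl_transport_along_grothendieck_transformation
    {C : Type u} [Category.{v} C] {F : Functoriality C}
    (T₁ T₂ : BivariantTheory F) (O₁ : StableOrientation T₁) (O₂ : StableOrientation T₂)
    (τ : GrothTrans T₁ T₂)
    -- `τ` is orientation preserving:
    (τθ : ∀ (X Y : C) (f : X ⟶ Y) (hf : F.Specialized f),
      τ.η f (O₁.θ f hf) = O₂.θ f hf)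
    {pt : C} (hpt : Limits.IsTerminal pt)
    (sq : ∀ X : C, IsPullback (hpt.from X) (𝟙 X) (𝟙 pt) (hpt.from X))
    (LBs : LineBundleTheory F)
    -- `B₁*` satisfies the section axiom and the formal group law axiom:
    (hsection₁ : SectionAxiom T₁ O₁ LBs)
    (hnilp₁ : ChernNilpotent T₁ O₁ LBs)
    (F₁ : ℕ → ℕ → T₁.B (𝟙 pt))
    
    (hformula₁ : ChernFormula T₁ O₁ LBs sq F₁)
    -- geometric input (products of projective spaces) for `B₂*`, as needed for the
    -- uniqueness of the formal group law of `B₂*`: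
    (P : ℕ → ℕ → C) (O10 O01 : ∀ n m, LBs.LB (P n m))
    (hvan₂ : ∀ n m i j, (n < i ∨ m < j) →
      T₂.cprod (T₂.cpow (T₂.c1L O₂ LBs (O10 n m)) i)
        (T₂.cpow (T₂.c1L O₂ LBs (O01 n m)) j) = 0)
    (pushPt₂ : ∀ n m, T₂.B (𝟙 (P n m)) → T₂.B (𝟙 pt))
    (pushPt₂_add : ∀ n m a b, pushPt₂ n m (a + b) = pushPt₂ n m a + pushPt₂ n m b)
    (hextract₂ : ∀ n m (c : T₂.B (𝟙 pt)),
      pushPt₂ n m (T₂.cprod (T₂.pull (sq (P n m)) c)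
        (T₂.cprod (T₂.cpow (T₂.c1L O₂ LBs (O10 n m)) n)
          (T₂.cpow (T₂.c1L O₂ LBs (O01 n m)) m))) = c) :
    -- `B₂*` satisfies the section axiom,
    SectionAxiom T₂ O₂ LBs
    -- `B₂*` satisfies the formal group law axiom, with formal group law `η(F^{B₁})`,
    ∧ ChernNilpotent T₂ O₂ LBs
    ∧ ChernFormula T₂ O₂ LBs sq (fun i j => τ.η (𝟙 pt) (F₁ i j))
    -- and `η(F^{B₁})` is the unique such power series:
    ∧ (∀ G : ℕ → ℕ → T₂.B (𝟙 pt), ChernFormula T₂ O₂ LBs sq G →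
        ∀ i j, G i j = τ.η (𝟙 pt) (F₁ i j)) := by
  -- Section axiom for `B₂*`.
  have hsec₂ : SectionAxiom T₂ O₂ LBs := by
    intro X L s
    rw [← eta_c1L τ τθ LBs L, hsection₁ X L s, eta_gysinOne τ τθ]
  -- Nilpotency of Chern classes in `B₂*`.
  have hnilp₂ : ChernNilpotent T₂ O₂ LBs := by
    intro X L
    obtain ⟨N, hN⟩ := hnilp₁ X L
    refine ⟨N, ?_⟩
    rw [← eta_c1L τ τθ LBs L, ← eta_cpow, hN, eta_zero]
  -- The Chern formula for `B₂*` with `η(F₁)`.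
  have hform₂ : ChernFormula T₂ O₂ LBs sq (fun i j => τ.η (𝟙 pt) (F₁ i j)) := by
    intro X L₁ L₂ N h₁ h₂
    obtain ⟨N₁, hN₁⟩ := hnilp₁ X L₁
    obtain ⟨N₂, hN₂⟩ := hnilp₁ X L₂
    set M := max N (max N₁ N₂) with hM
    have e1 := hformula₁ X L₁ L₂ M
      (cpow_eq_zero T₁ hN₁ (le_trans (le_max_left _ _) (le_max_right _ _)))
      (cpow_eq_zero T₁ hN₂ (le_trans (le_max_right _ _) (le_max_right _ _)))
    have e2 := congrArg (τ.η (𝟙 X)) e1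
    rw [eta_evalPS, eta_c1L τ τθ, eta_c1L τ τθ, eta_c1L τ τθ] at e2
    rw [e2]
    exact evalPS_trunc T₂ sq _ _ _ (le_max_left _ _) h₁ h₂
  refine ⟨hsec₂, hnilp₂, hform₂, ?_⟩
  -- Uniqueness.
  intro G hG i j
  set H : ℕ → ℕ → T₂.B (𝟙 pt) := fun a b => τ.η (𝟙 pt) (F₁ a b) with hHdef
  suffices key : ∀ k i j, i + j = k → G i j = H i j from key (i + j) i j rfl
  intro k
  induction k using Nat.strong_induction_on with
  | _ k ih =>
    intro i j hij
    subst hij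
    set X := P i j
    set x := T₂.c1L O₂ LBs (O10 i j) with hx'
    set y := T₂.c1L O₂ LBs (O01 i j) with hy'
    set N := max i j + 1 with hN'
    have hx : T₂.cpow x N = 0 := by
      have h := hvan₂ i j N 0 (Or.inl (by omega))
      simp only [BivariantTheory.cpow] at h
      rwa [cprod_one] at h
    have hy : T₂.cpow y N = 0 := by
      have h := hvan₂ i j 0 N (Or.inr (by omega))
      simp only [BivariantTheory.cpow] at h
      rwa [one_cprod] at h
    have hGf := hG X (O10 i j) (O01 i j) N hx hy
    have hHf := hform₂ X (O10 i j) (O01 i j) N hx hy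
    have E : evalPS T₂ sq G x y N = evalPS T₂ sq H x y N := hGf.symm.trans hHf
    unfold evalPS at E
    set t : (ℕ → ℕ → T₂.B (𝟙 pt)) → ℕ → ℕ → T₂.B (𝟙 X) := fun Fc a b =>
      T₂.cprod (T₂.pull (sq X) (Fc a b)) (T₂.cprod (T₂.cpow x a) (T₂.cpow y b))
      with htdef
    -- terms outside the box vanish
    have hvant : ∀ (Fc : ℕ → ℕ → T₂.B (𝟙 pt)) a b, (i < a ∨ j < b) → t Fc a b = 0 := by
      intro Fc a b hab
      simp only [htdef]
      rw [hvan₂ i j a b hab, cprod_zero]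
    have E0 : ∑ a ∈ Finset.range N, ∑ b ∈ Finset.range N, (t G a b - t H a b) = 0 := by
      simp only [Finset.sum_sub_distrib]
      rw [sub_eq_zero]
      exact E
    have hiN : i ∈ Finset.range N := Finset.mem_range.mpr (by omega)
    have hjN : j ∈ Finset.range N := Finset.mem_range.mpr (by omega)
    have hout : ∑ b ∈ Finset.range N, (t G i b - t H i b) = 0 := by
      rw [← E0]
      refine (Finset.sum_eq_single_of_mem (f := fun a => ∑ b ∈ Finset.range N, (t G a b - t H a b)) i hiN fun a _ ha => ?_).symm
      refine Finset.sum_eq_zero fun b _ => ?_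
      rcases lt_or_gt_of_ne ha with hlt | hgt
      · rcases le_or_gt b j with hbj | hbj
        · have hEq : G a b = H a b := ih (a + b) (by omega) a b rfl
          rw [sub_eq_zero]
          simp only [htdef]
          rw [hEq]
        · rw [hvant G a b (Or.inr hbj), hvant H a b (Or.inr hbj), sub_self]
      · rw [hvant G a b (Or.inl hgt), hvant H a b (Or.inl hgt), sub_self]
    have hone : t G i j - t H i j = 0 := by
      rw [← hout]
      refine (Finset.sum_eq_single_of_mem (f := fun b => t G i b - t H i b) j hjN fun b _ hb => ?_).symm
      show t G i b - t H i b = 0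
      rcases lt_or_gt_of_ne hb with hlt | hgt
      · have hEq : G i b = H i b := ih (i + b) (by omega) i b rfl
        rw [sub_eq_zero]
        simp only [htdef]
        rw [hEq]
      · rw [hvant G i b (Or.inr hgt), hvant H i b (Or.inr hgt), sub_self]
    have hone' : t G i j = t H i j := sub_eq_zero.mp hone
    have := congrArg (pushPt₂ i j) hone'
    exact (hextract₂ i j (G i j)).symm.trans (this.trans (hextract₂ i j (H i j)))
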